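/- Let E₀, E₁, D₀, D₁ : [0,∞) → [0,∞) be C¹ functions and c > 0 a constant such that E₀' + D₀ ≤ 0, E₁' + D₁ ≤ 0, and E₀ ≤ c·D₁ pointwise on [0,∞). Then there exists a constant C (depending only on c) such that for all t ≥ 0: (1+t)·E₀(t) + ∫₀ᵗ (1+τ)·D₀(τ) dτ ≤ C·(E₀(0) + E₁(0)). -/

import Mathlib

/-- Abstract two-layer energy lemma: if `E₀' + D₀ ≤ 0`, `E₁' + D₁ ≤ 0` and
`E₀ ≤ c D₁` on `[0,∞)`, then `(1+t)E₀(t) + ∫₀ᵗ (1+τ)D₀ dτ ≤ C (E₀(0) + E₁(0))`. -/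
theorem two_layer_energy_decay (c : ℝ) (hc : 0 < c) :
    ∃ C : ℝ, 0 < C ∧ ∀ E₀ E₁ D₀ D₁ : ℝ → ℝ,
      ContDiff ℝ 1 E₀ → ContDiff ℝ 1 E₁ → ContDiff ℝ 1 D₀ → ContDiff ℝ 1 D₁ →
      (∀ t, 0 ≤ t → 0 ≤ E₀ t) → (∀ t, 0 ≤ t → 0 ≤ E₁ t) →
      (∀ t, 0 ≤ t → 0 ≤ D₀ t) → (∀ t, 0 ≤ t → 0 ≤ D₁ t) →
      (∀ t, 0 ≤ t → deriv E₀ t + D₀ t ≤ 0) →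
      (∀ t, 0 ≤ t → deriv E₁ t + D₁ t ≤ 0) →
      (∀ t, 0 ≤ t → E₀ t ≤ c * D₁ t) →
      ∀ t, 0 ≤ t →
        (1 + t) * E₀ t + (∫ τ in (0:ℝ)..t, (1 + τ) * D₀ τ) ≤ C * (E₀ 0 + E₁ 0) := by
  refine ⟨1 + c, by linarith, ?_⟩
  intro E₀ E₁ D₀ D₁ hE₀ hE₁ hD₀ hD₁ hE₀pos hE₁pos hD₀pos hD₁pos h0 h1 hcmp t ht
  have hE₀d : Differentiable ℝ E₀ := hE₀.differentiable one_ne_zero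
  have hE₁d : Differentiable ℝ E₁ := hE₁.differentiable one_ne_zero
  have hcd0 : Continuous (deriv E₀) := hE₀.continuous_deriv le_rfl
  have hcd1 : Continuous (deriv E₁) := hE₁.continuous_deriv le_rfl
  -- FTC for (1+s) * E₀ s
  have hF : ∀ τ : ℝ, HasDerivAt (fun s => (1 + s) * E₀ s)
      (E₀ τ + (1 + τ) * deriv E₀ τ) τ := by
    intro τ
    have h := (((hasDerivAt_id τ).const_add 1).mul (hE₀d τ).hasDerivAt)
    simpa [one_mul, add_comm, Pi.mul_def] using h
  have hint1 : IntervalIntegrable (fun τ => E₀ τ + (1 + τ) * deriv E₀ τ)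
      MeasureTheory.volume 0 t :=
    (hE₀.continuous.add ((continuous_const.add continuous_id).mul hcd0)).intervalIntegrable 0 t
  have hFTC : (∫ τ in (0:ℝ)..t, (E₀ τ + (1 + τ) * deriv E₀ τ))
      = (1 + t) * E₀ t - (1 + 0) * E₀ 0 :=
    intervalIntegral.integral_eq_sub_of_hasDerivAt (fun τ _ => hF τ) hint1
  have hFTC1 : (∫ τ in (0:ℝ)..t, deriv E₁ τ) = E₁ t - E₁ 0 :=
    intervalIntegral.integral_eq_sub_of_hasDerivAt
      (fun τ _ => (hE₁d τ).hasDerivAt) (hcd1.intervalIntegrable 0 t)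
  have hintD₀ : IntervalIntegrable (fun τ => (1 + τ) * D₀ τ) MeasureTheory.volume 0 t :=
    ((continuous_const.add continuous_id).mul hD₀.continuous).intervalIntegrable 0 t
  have hintsum : IntervalIntegrable
      (fun τ => (E₀ τ + (1 + τ) * deriv E₀ τ) + (1 + τ) * D₀ τ)
      MeasureTheory.volume 0 t := hint1.add hintD₀
  have hintE₁ : IntervalIntegrable (fun τ => -(c * deriv E₁ τ)) MeasureTheory.volume 0 t :=
    ((continuous_const.mul hcd1).neg).intervalIntegrable 0 t
  -- pointwise bound on [0,t]
  have hmono : (∫ τ in (0:ℝ)..t, ((E₀ τ + (1 + τ) * deriv E₀ τ) + (1 + τ) * D₀ τ))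
      ≤ ∫ τ in (0:ℝ)..t, -(c * deriv E₁ τ) := by
    apply intervalIntegral.integral_mono_on ht hintsum hintE₁
    intro τ hτ
    have hτ0 : 0 ≤ τ := hτ.1
    have h1τ : deriv E₀ τ + D₀ τ ≤ 0 := h0 τ hτ0
    have h2τ : deriv E₁ τ + D₁ τ ≤ 0 := h1 τ hτ0
    have h3τ : E₀ τ ≤ c * D₁ τ := hcmp τ hτ0
    have h4 : (1 + τ) * (deriv E₀ τ + D₀ τ) ≤ 0 :=
      mul_nonpos_of_nonneg_of_nonpos (by linarith) h1τ
    nlinarith [hD₁pos τ hτ0]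
  have hsum : (∫ τ in (0:ℝ)..t, ((E₀ τ + (1 + τ) * deriv E₀ τ) + (1 + τ) * D₀ τ))
      = ((1 + t) * E₀ t - (1 + 0) * E₀ 0) + ∫ τ in (0:ℝ)..t, (1 + τ) * D₀ τ := by
    rw [intervalIntegral.integral_add hint1 hintD₀, hFTC]
  have hrhs : (∫ τ in (0:ℝ)..t, -(c * deriv E₁ τ)) = -(c * (E₁ t - E₁ 0)) := by
    rw [intervalIntegral.integral_neg, intervalIntegral.integral_const_mul, hFTC1]
  rw [hsum, hrhs] at hmono
  have hE₁t : 0 ≤ E₁ t := hE₁pos t ht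
  have hE₀0 : 0 ≤ E₀ 0 := hE₀pos 0 le_rfl
  have hE₁0 : 0 ≤ E₁ 0 := hE₁pos 0 le_rfl
  nlinarith
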